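/- The Toda Lax matrix ℓ(j,λ) = [[λ + X_j, −exp(x_j)], [exp(−x_j), 0]] satisfies the ultralocal Poisson algebra relation {ℓ_a(j,λ), ℓ_b(k,μ)} = δ_{jk} [r(λ−μ), ℓ_a(j,λ)ℓ_b(k,μ)], where r(λ) = P/λ is the rational r-matrix. -/

import Mathlib

open Matrix Kronecker

/-- Phase space of the N-site Toda chain: coordinates x and momenta X. -/
abbrev Phase (N : ℕ) := (Fin N → ℝ) × (Fin N → ℝ)

/-- Canonical Poisson bracket with {X_j, x_k} = δ_{jk}. -/
noncomputable def pb {N : ℕ} (f g : Phase N → ℝ) : Phase N → ℝ :=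
  fun p => ∑ j : Fin N,
    (fderiv ℝ f p (0, Pi.single j 1) * fderiv ℝ g p (Pi.single j 1, 0)
      - fderiv ℝ f p (Pi.single j 1, 0) * fderiv ℝ g p (0, Pi.single j 1))

/-- Entrywise Poisson bracket {A_a, B_b} = Σ {A_ij, B_kl} E_ij ⊗ E_kl. -/
noncomputable def matPB {N : ℕ} (A B : Matrix (Fin 2) (Fin 2) (Phase N → ℝ)) :
    Matrix (Fin 2 × Fin 2) (Fin 2 × Fin 2) (Phase N → ℝ) :=
  fun ik jl => pb (A ik.1 jl.1) (B ik.2 jl.2)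

/-- The Toda Lax matrix ℓ(j,λ). -/
noncomputable def ell {N : ℕ} (j : Fin N) (lam : ℝ) :
    Matrix (Fin 2) (Fin 2) (Phase N → ℝ) :=
  !![fun p => lam + p.2 j, fun p => -Real.exp (p.1 j);
     fun p => Real.exp (-(p.1 j)), 0]

/-- The permutation operator on ℂ²⊗ℂ² (here realized over the function algebra). -/
def PswapF {N : ℕ} : Matrix (Fin 2 × Fin 2) (Fin 2 × Fin 2) (Phase N → ℝ) :=
  fun ij kl => if ij.1 = kl.2 ∧ ij.2 = kl.1 then 1 else 0

/-- The rational r-matrix r(λ) = P/λ as a matrix of constant functions. -/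
noncomputable def rMat {N : ℕ} (lam : ℝ) :
    Matrix (Fin 2 × Fin 2) (Fin 2 × Fin 2) (Phase N → ℝ) :=
  fun a b => fun _ => lam⁻¹ * (if a.1 = b.2 ∧ a.2 = b.1 then 1 else 0)


section Aux
variable {N : ℕ}

lemma fd_a (j : Fin N) (lam : ℝ) (p v : Phase N) :
    fderiv ℝ (fun p : Phase N => lam + p.2 j) p v = v.2 j := by
  have h : HasFDerivAt (fun p : Phase N => lam + p.2 j)
      ((ContinuousLinearMap.proj j).comp (ContinuousLinearMap.snd ℝ (Fin N → ℝ) (Fin N → ℝ))) p := by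
    exact (((ContinuousLinearMap.proj (R := ℝ) (φ := fun _ : Fin N => ℝ) j).comp
        (ContinuousLinearMap.snd ℝ (Fin N → ℝ) (Fin N → ℝ))).hasFDerivAt (x := p)).const_add lam
  rw [h.fderiv]; rfl

lemma fd_b (j : Fin N) (p v : Phase N) :
    fderiv ℝ (fun p : Phase N => -Real.exp (p.1 j)) p v = -(Real.exp (p.1 j) * v.1 j) := by
  have hl : HasFDerivAt (fun p : Phase N => p.1 j)
      ((ContinuousLinearMap.proj j).comp (ContinuousLinearMap.fst ℝ (Fin N → ℝ) (Fin N → ℝ))) p :=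
    ((ContinuousLinearMap.proj (R := ℝ) (φ := fun _ : Fin N => ℝ) j).comp
        (ContinuousLinearMap.fst ℝ (Fin N → ℝ) (Fin N → ℝ))).hasFDerivAt (x := p)
  have h := ((Real.hasDerivAt_exp (p.1 j)).comp_hasFDerivAt p hl).neg
  simp only [Function.comp_def] at h
  rw [HasFDerivAt.fderiv (f := fun p : Phase N => -Real.exp (p.1 j)) h]; simp [mul_comm]

lemma fd_b' (j : Fin N) (p v : Phase N) :
    fderiv ℝ (fun p : Phase N => Real.exp (p.1 j)) p v = Real.exp (p.1 j) * v.1 j := by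
  have hl : HasFDerivAt (fun p : Phase N => p.1 j)
      ((ContinuousLinearMap.proj j).comp (ContinuousLinearMap.fst ℝ (Fin N → ℝ) (Fin N → ℝ))) p :=
    ((ContinuousLinearMap.proj (R := ℝ) (φ := fun _ : Fin N => ℝ) j).comp
        (ContinuousLinearMap.fst ℝ (Fin N → ℝ) (Fin N → ℝ))).hasFDerivAt (x := p)
  have h := (Real.hasDerivAt_exp (p.1 j)).comp_hasFDerivAt p hl
  simp only [Function.comp_def] at h
  rw [h.fderiv]; simp [mul_comm]

lemma fd_c (j : Fin N) (p v : Phase N) :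
    fderiv ℝ (fun p : Phase N => Real.exp (-(p.1 j))) p v = -(Real.exp (-(p.1 j)) * v.1 j) := by
  have hl : HasFDerivAt (fun p : Phase N => -(p.1 j))
      (-((ContinuousLinearMap.proj j).comp (ContinuousLinearMap.fst ℝ (Fin N → ℝ) (Fin N → ℝ)))) p :=
    (-((ContinuousLinearMap.proj (R := ℝ) (φ := fun _ : Fin N => ℝ) j).comp
        (ContinuousLinearMap.fst ℝ (Fin N → ℝ) (Fin N → ℝ)))).hasFDerivAt (x := p)
  have h := (Real.hasDerivAt_exp (-(p.1 j))).comp_hasFDerivAt p hl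
  simp only [Function.comp_def] at h
  rw [h.fderiv]; simp [mul_comm]

lemma fd_z (p v : Phase N) : fderiv ℝ (0 : Phase N → ℝ) p v = 0 := by
  rw [show (0 : Phase N → ℝ) = fun _ => (0:ℝ) from rfl, fderiv_fun_const]; rfl

lemma fd_snd (j : Fin N) (p v : Phase N) :
    fderiv ℝ (fun p : Phase N => p.2 j) p v = v.2 j := by
  have := fd_a j 0 p v
  simp only [zero_add] at this
  exact this

end Aux

set_option maxHeartbeats 2000000 in
/-- the Toda Lax matrix satisfies the ultralocal Poisson algebra
    {ℓ_a(j,λ), ℓ_b(k,μ)} = δ_{jk} [r(λ−μ), ℓ_a(j,λ) ℓ_b(k,μ)]. -/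
theorem toda_ultralocal (N : ℕ) (j k : Fin N) (lam mu : ℝ) (h : lam - mu ≠ 0) :
    matPB (ell j lam) (ell k mu) =
      if j = k then
        rMat (lam - mu) * ((ell j lam ⊗ₖ (1 : Matrix (Fin 2) (Fin 2) (Phase N → ℝ)))
            * ((1 : Matrix (Fin 2) (Fin 2) (Phase N → ℝ)) ⊗ₖ ell k mu))
        - ((ell j lam ⊗ₖ (1 : Matrix (Fin 2) (Fin 2) (Phase N → ℝ)))
            * ((1 : Matrix (Fin 2) (Fin 2) (Phase N → ℝ)) ⊗ₖ ell k mu)) * rMat (lam - mu)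
      else 0 := by
  by_cases hjk : j = k
  · subst hjk
    rw [if_pos rfl]
    ext ⟨i1, i2⟩ ⟨j1, j2⟩ p
    fin_cases i1 <;> fin_cases i2 <;> fin_cases j1 <;> fin_cases j2 <;>
      simp [matPB, pb, ell, rMat, fd_a, fd_snd, fd_b, fd_b', fd_c, fd_z, Pi.single_apply,
        mul_ite, ite_mul, Matrix.mul_apply, Matrix.sub_apply, Matrix.kroneckerMap_apply,
        Matrix.one_apply, Fintype.sum_prod_type, Fin.sum_univ_two, Pi.mul_apply, Pi.sub_apply,
        Finset.mul_sum, Finset.sum_sub_distrib] <;>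
      field_simp <;> ring
  · rw [if_neg hjk]
    ext ⟨i1, i2⟩ ⟨j1, j2⟩ p
    fin_cases i1 <;> fin_cases i2 <;> fin_cases j1 <;> fin_cases j2 <;>
      simp [matPB, pb, ell, fd_a, fd_snd, fd_b, fd_b', fd_c, fd_z, Pi.single_apply,
        mul_ite, ite_mul, hjk, Ne.symm hjk]
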